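/- For every positive integer n, the Narayana polynomial N_n(x) = \sum_{i=0}^{n-1} \frac{1}{n} \binom{n}{i} \binom{n}{i+1} x^i has only real zeros. -/

import Mathlib

open Polynomial Finset

private lemma deriv_step (p : Polynomial ℝ) (hp : p.roots.card = p.natDegree) :
    (derivative p).roots.card = (derivative p).natDegree ∧
      (derivative p).natDegree = p.natDegree - 1 := by
  have h1 := card_roots' (derivative p)
  have h2 := natDegree_derivative_le p
  have h3 := card_roots_le_derivative p
  omega

private lemma deriv_iter (p : Polynomial ℝ) (hp : p.roots.card = p.natDegree) (k : ℕ) :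
    (derivative^[k] p).roots.card = (derivative^[k] p).natDegree ∧
      (derivative^[k] p).natDegree = p.natDegree - k := by
  induction k with
  | zero => simpa using hp
  | succ m ih =>
      obtain ⟨h1, h2⟩ := ih
      obtain ⟨h3, h4⟩ := deriv_step _ h1
      rw [Function.iterate_succ_apply']
      exact ⟨h3, by omega⟩

private lemma deriv_term (a b : ℕ) :
    derivative ((X : Polynomial ℝ)^a * (1 - X)^b) =
      C ((a : ℝ)) * (X^(a-1) * (1-X)^b) - C ((b : ℝ)) * (X^a * (1-X)^(b-1)) := by
  rw [derivative_mul, derivative_X_pow, derivative_pow]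
  simp only [derivative_sub, derivative_one, derivative_X, zero_sub, C_eq_natCast]
  ring

private lemma rodrigues (n : ℕ) (k : ℕ) :
    derivative^[k] ((X : Polynomial ℝ)^n * (1 - X)^n) =
      ∑ i ∈ range (n+1),
        C ((-1 : ℝ)^(k+i) * (k.choose i) * (n.descFactorial i) * (n.descFactorial (k-i))) *
          (X^(n-i) * (1-X)^(n-(k-i))) := by
  induction k with
  | zero =>
      rw [Function.iterate_zero_apply, Finset.sum_range_succ']
      have : ∀ i ∈ range n, (C ((-1 : ℝ)^(0+(i+1)) * ((0:ℕ).choose (i+1)) *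
          (n.descFactorial (i+1)) * (n.descFactorial (0-(i+1)))) *
          ((X:Polynomial ℝ)^(n-(i+1)) * (1-X)^(n-(0-(i+1))))) = 0 := by
        intro i _
        simp [Nat.choose_eq_zero_of_lt (Nat.succ_pos i)]
      rw [Finset.sum_congr rfl this]
      simp
  | succ k ih =>
      rw [Function.iterate_succ_apply', ih, derivative_sum]
      have hterm : ∀ i ∈ range (n+1),
          derivative (C ((-1 : ℝ)^(k+i) * (k.choose i) * (n.descFactorial i) *
              (n.descFactorial (k-i))) * ((X:Polynomial ℝ)^(n-i) * (1-X)^(n-(k-i)))) =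
            (C ((-1 : ℝ)^(k+i) * (k.choose i) * (n.descFactorial i) *
                (n.descFactorial (k-i)) * ((n-i : ℕ) : ℝ)) *
              (X^(n-i-1) * (1-X)^(n-(k-i))))
            - (C ((-1 : ℝ)^(k+i) * (k.choose i) * (n.descFactorial i) *
                (n.descFactorial (k-i)) * ((n-(k-i) : ℕ) : ℝ)) *
              (X^(n-i) * (1-X)^(n-(k-i)-1))) := by
        intro i _
        rw [derivative_C_mul, deriv_term]
        rw [mul_sub]
        have e1 : C ((-1 : ℝ)^(k+i) * (k.choose i) * (n.descFactorial i) *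
            (n.descFactorial (k-i))) * (C (((n-i : ℕ) : ℝ)) * (X^(n-i-1) * (1-X)^(n-(k-i))))
            = C ((-1 : ℝ)^(k+i) * (k.choose i) * (n.descFactorial i) *
                (n.descFactorial (k-i)) * ((n-i : ℕ) : ℝ)) *
              ((X:Polynomial ℝ)^(n-i-1) * (1-X)^(n-(k-i))) := by
          rw [← mul_assoc, ← C_mul]
        have e2 : C ((-1 : ℝ)^(k+i) * (k.choose i) * (n.descFactorial i) *
            (n.descFactorial (k-i))) * (C (((n-(k-i) : ℕ) : ℝ)) * (X^(n-i) * (1-X)^(n-(k-i)-1)))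
            = C ((-1 : ℝ)^(k+i) * (k.choose i) * (n.descFactorial i) *
                (n.descFactorial (k-i)) * ((n-(k-i) : ℕ) : ℝ)) *
              ((X:Polynomial ℝ)^(n-i) * (1-X)^(n-(k-i)-1)) := by
          rw [← mul_assoc, ← C_mul]
        rw [e1, e2]
      rw [Finset.sum_congr rfl hterm, Finset.sum_sub_distrib,
        Finset.sum_range_succ, Finset.sum_range_succ']
      conv_rhs => rw [Finset.sum_range_succ']
      have hfn : (C ((-1 : ℝ)^(k+n) * (k.choose n) * (n.descFactorial n) *
          (n.descFactorial (k-n)) * ((n-n : ℕ) : ℝ)) *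
          ((X:Polynomial ℝ)^(n-n-1) * (1-X)^(n-(k-n)))) = 0 := by
        simp
      have h0 : (C ((-1 : ℝ)^(k+1+0) * ((k+1).choose 0) * (n.descFactorial 0) *
            (n.descFactorial (k+1-0))) *
            ((X:Polynomial ℝ)^(n-0) * (1-X)^(n-(k+1-0)))) =
          - (C ((-1 : ℝ)^(k+0) * (k.choose 0) * (n.descFactorial 0) *
            (n.descFactorial (k-0)) * ((n-(k-0) : ℕ) : ℝ)) *
            ((X:Polynomial ℝ)^(n-0) * (1-X)^(n-(k-0)-1))) := by
        rw [← neg_mul, ← C_neg]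
        have e : n - (k+1) = n - k - 1 := by omega
        simp only [Nat.sub_zero, Nat.choose_zero_right, Nat.descFactorial_zero,
          Nat.descFactorial_succ, e]
        congr 1
        push_cast
        ring
      have hjs : ∀ j ∈ range n,
          (C ((-1 : ℝ)^(k+j) * (k.choose j) * (n.descFactorial j) *
              (n.descFactorial (k-j)) * ((n-j : ℕ) : ℝ)) *
            ((X:Polynomial ℝ)^(n-j-1) * (1-X)^(n-(k-j))))
          - (C ((-1 : ℝ)^(k+(j+1)) * (k.choose (j+1)) * (n.descFactorial (j+1)) *
              (n.descFactorial (k-(j+1))) * ((n-(k-(j+1)) : ℕ) : ℝ)) *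
            ((X:Polynomial ℝ)^(n-(j+1)) * (1-X)^(n-(k-(j+1))-1)))
          = (C ((-1 : ℝ)^(k+1+(j+1)) * ((k+1).choose (j+1)) * (n.descFactorial (j+1)) *
              (n.descFactorial (k+1-(j+1)))) *
            ((X:Polynomial ℝ)^(n-(j+1)) * (1-X)^(n-(k+1-(j+1))))) := by
        intro j hj
        rcases lt_trichotomy j k with h | h | h
        · obtain ⟨m, rfl⟩ : ∃ m, k = j + 1 + m := ⟨k - (j+1), by omega⟩
          have e1 : j + 1 + m - j = m + 1 := by omega
          have e2 : j + 1 + m - (j+1) = m := by omega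
          have e3 : j + 1 + m + 1 - (j+1) = m + 1 := by omega
          have e4 : n - j - 1 = n - (j+1) := by omega
          have e5 : n - m - 1 = n - (m+1) := by omega
          rw [e1, e2, e3, e4, e5]
          rw [← sub_mul, ← C_sub]
          congr 1
          rw [Nat.choose_succ_succ, Nat.descFactorial_succ, Nat.descFactorial_succ]
          simp only [Nat.succ_eq_add_one]
          push_cast
          ring_nf
        · subst h
          have e1 : j - j = 0 := by omega
          have e2 : j + 1 - (j+1) = 0 := by omega
          have e3 : n - j - 1 = n - (j+1) := by omega
          rw [e1, e2, e3, Nat.descFactorial_succ]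
          simp only [Nat.choose_self, Nat.choose_succ_self, Nat.sub_zero,
            Nat.descFactorial_zero, Nat.cast_zero, Nat.cast_one, mul_zero, zero_mul,
            mul_one, map_zero, sub_zero]
          congr 1
          rw [C_inj]
          push_cast
          ring_nf
        · have c1 : k.choose j = 0 := Nat.choose_eq_zero_of_lt h
          have c2 : k.choose (j+1) = 0 := Nat.choose_eq_zero_of_lt (by omega)
          have c3 : (k+1).choose (j+1) = 0 := Nat.choose_eq_zero_of_lt (by omega)
          rw [c1, c2, c3]
          simp
      have hsum := Finset.sum_congr rfl hjs
      rw [Finset.sum_sub_distrib] at hsum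
      linear_combination hsum + hfn - h0

private lemma one_sub_X_eq : (1 - X : Polynomial ℝ) = C (-1) * (X - C 1) := by
  rw [map_neg, C_1]; ring

private lemma g_facts (n : ℕ) :
    ((X : Polynomial ℝ)^n * (1-X)^n).roots.card = ((X : Polynomial ℝ)^n * (1-X)^n).natDegree ∧
      ((X : Polynomial ℝ)^n * (1-X)^n).natDegree = 2*n := by
  have hX : (X : Polynomial ℝ)^n ≠ 0 := pow_ne_zero _ X_ne_zero
  have h1 : (1 - X : Polynomial ℝ) ≠ 0 := by
    rw [one_sub_X_eq]
    exact mul_ne_zero (by simp) (X_sub_C_ne_zero 1)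
  have h1n : ((1 : Polynomial ℝ) - X)^n ≠ 0 := pow_ne_zero _ h1
  constructor
  · rw [roots_mul (mul_ne_zero hX h1n), roots_pow, roots_pow, roots_X,
      natDegree_mul hX h1n, natDegree_pow, natDegree_pow, natDegree_X]
    rw [one_sub_X_eq, roots_C_mul _ (by norm_num : (-1:ℝ) ≠ 0), roots_X_sub_C,
      natDegree_C_mul (by norm_num : (-1:ℝ) ≠ 0), natDegree_X_sub_C]
    simp
  · rw [natDegree_mul hX h1n, natDegree_pow, natDegree_pow, natDegree_X, one_sub_X_eq,
      natDegree_C_mul (by norm_num : (-1:ℝ) ≠ 0), natDegree_X_sub_C]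
    ring

private lemma real_root_of_card (p : Polynomial ℝ) (hp0 : p ≠ 0)
    (h : p.roots.card = p.natDegree) (u : ℂ) (hu : aeval u p = 0) : u.im = 0 := by
  have hs : Splits p := (splits_iff_card_roots).2 h
  have hpr := hs.eq_prod_roots
  rw [hpr] at hu
  rw [map_mul, aeval_C] at hu
  rcases mul_eq_zero.1 hu with h1 | h1
  · rw [show (algebraMap ℝ ℂ) p.leadingCoeff = ((p.leadingCoeff : ℝ) : ℂ) from rfl,
      Complex.ofReal_eq_zero] at h1
    exact absurd h1 (leadingCoeff_ne_zero.2 hp0)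
  · rw [map_multiset_prod, Multiset.map_map] at h1
    have h2 := Multiset.prod_eq_zero_iff.1 h1
    obtain ⟨r, hr, hr0⟩ := Multiset.mem_map.1 h2
    simp only [Function.comp_apply, map_sub, aeval_X, aeval_C] at hr0
    have : u = (r : ℂ) := by
      have := sub_eq_zero.1 hr0
      simpa using this
    rw [this]
    exact Complex.ofReal_im r

private lemma nat_coeff (n j : ℕ) (h : j < n) :
    (n-1).choose (n-1-j) * n.descFactorial (n-1-j) * n.descFactorial (n-1-(n-1-j))
      = (n-1).factorial * (n.choose j * n.choose (j+1)) := by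
  have e0 : n-1-(n-1-j) = j := by omega
  have e1 : (n-1).choose (n-1-j) = (n-1).choose j := Nat.choose_symm (by omega : j ≤ n-1)
  have e2 : n.descFactorial (n-1-j) = (n-1-j).factorial * n.choose (n-1-j) :=
    Nat.descFactorial_eq_factorial_mul_choose n _
  have e3 : n.choose (n-1-j) = n.choose (j+1) := by
    rw [show n-1-j = n-(j+1) by omega]
    exact Nat.choose_symm (by omega : j+1 ≤ n)
  have e4 : n.descFactorial j = j.factorial * n.choose j :=
    Nat.descFactorial_eq_factorial_mul_choose n _
  have e5 : (n-1).choose j * j.factorial * (n-1-j).factorial = (n-1).factorial :=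
    Nat.choose_mul_factorial_mul_factorial (by omega : j ≤ n-1)
  rw [e0, e1, e2, e3, e4, ← e5]
  ring


theorem stmt_16 (n : ℕ) (hn : 0 < n) :
    ∀ z : ℂ, aeval z (∑ i ∈ Finset.range n,
        C ((1 / (n : ℝ)) * (n.choose i) * (n.choose (i + 1))) * (X : Polynomial ℝ) ^ i) = 0 →
      z.im = 0 := by
  intro z hz
  by_cases hz1 : z = 1
  · rw [hz1]; exact Complex.one_im
  have hz1' : z - 1 ≠ 0 := sub_ne_zero.2 hz1
  have hn0 : (n:ℂ) ≠ 0 := Nat.cast_ne_zero.2 hn.ne'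
  -- clean hypothesis
  rw [map_sum] at hz
  simp only [map_mul, map_pow, aeval_C, aeval_X] at hz
  have hzc : ∑ i ∈ range n, ((n.choose i : ℂ) * (n.choose (i+1)) * z^i) = 0 := by
    have h2 := congrArg (fun t => (n:ℂ) * t) hz
    simp only [mul_zero, Finset.mul_sum] at h2
    rw [← h2]
    refine Finset.sum_congr rfl fun i _ => ?_
    simp only [Complex.coe_algebraMap]
    push_cast
    field_simp
  -- the polynomial g and its derivative
  obtain ⟨hgr, hgd⟩ := g_facts n
  obtain ⟨hdr, hdd⟩ := deriv_iter _ hgr (n-1)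
  have hdd' : (derivative^[n-1] ((X : Polynomial ℝ)^n * (1-X)^n)).natDegree = n+1 := by
    rw [hdd, hgd]; omega
  have hd0 : derivative^[n-1] ((X : Polynomial ℝ)^n * (1-X)^n) ≠ 0 := by
    intro h
    rw [h, natDegree_zero] at hdd'
    omega
  set w : ℂ := z / (z-1) with hwdef
  have hw1 : (z-1) * w = z := by
    rw [hwdef]; field_simp
  have hw2 : (z-1) * (1-w) = -1 := by
    rw [mul_sub, mul_one, hw1]; ring
  have key : (z-1)^(n+1) * aeval w (derivative^[n-1] ((X : Polynomial ℝ)^n * (1-X)^n)) = 0 := by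
    rw [rodrigues n (n-1), map_sum, Finset.mul_sum]
    have hterm : ∀ i ∈ range (n+1),
        (z-1)^(n+1) * (aeval w (C ((-1 : ℝ)^((n-1)+i) * ((n-1).choose i) * (n.descFactorial i) *
            (n.descFactorial ((n-1)-i))) * ((X : Polynomial ℝ)^(n-i) * (1-X)^(n-((n-1)-i)))))
          = (-1 : ℂ)^n * ((((n-1).choose i * n.descFactorial i * n.descFactorial (n-1-i) : ℕ)) : ℂ)
              * z^(n-i) := by
      intro i hi
      rcases Nat.lt_or_ge i n with h | h
      · rw [show n - ((n-1) - i) = i+1 by omega]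
        simp only [map_mul, map_sub, map_pow, map_one, aeval_C, aeval_X,
          Complex.coe_algebraMap]
        push_cast
        rw [show (z-1)^(n+1) = (z-1)^(n-i) * (z-1)^(i+1) by
          rw [← pow_add]; congr 1; omega]
        have e1 : (z-1)^(n-i) * w^(n-i) = z^(n-i) := by rw [← mul_pow, hw1]
        have e2 : (z-1)^(i+1) * (1-w)^(i+1) = (-1 : ℂ)^(i+1) := by rw [← mul_pow, hw2]
        have e3 : (-1 : ℂ)^((n-1)+i) * (-1 : ℂ)^(i+1) = (-1 : ℂ)^n := by
          rw [← pow_add, show (n-1)+i+(i+1) = n + 2*i by omega, pow_add, pow_mul]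
          norm_num
        linear_combination
          ((-1 : ℂ)^((n-1)+i) * (((n-1).choose i : ℂ) * (n.descFactorial i : ℂ) *
            (n.descFactorial (n-1-i) : ℂ)) * ((1-w)^(i+1) * (z-1)^(i+1))) * e1 +
          ((-1 : ℂ)^((n-1)+i) * (((n-1).choose i : ℂ) * (n.descFactorial i : ℂ) *
            (n.descFactorial (n-1-i) : ℂ)) * z^(n-i)) * e2 +
          ((((n-1).choose i : ℂ) * (n.descFactorial i : ℂ) *
            (n.descFactorial (n-1-i) : ℂ)) * z^(n-i)) * e3
      · have hin : i = n := by simp only [mem_range] at hi; omega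
        rw [hin, Nat.choose_eq_zero_of_lt (by omega : n-1 < n)]
        simp
    rw [Finset.sum_congr rfl hterm]
    rw [Finset.sum_range_succ, Nat.choose_eq_zero_of_lt (by omega : n-1 < n)]
    simp only [Nat.zero_mul, zero_mul, Nat.cast_zero, mul_zero, zero_mul, add_zero]
    rw [← Finset.sum_range_reflect]
    have hterm2 : ∀ j ∈ range n,
        (-1 : ℂ)^n * ((((n-1).choose (n-1-j) * n.descFactorial (n-1-j) *
            n.descFactorial (n-1-(n-1-j)) : ℕ)) : ℂ) * z^(n-(n-1-j))
          = ((-1 : ℂ)^n * ((n-1).factorial : ℂ) * z) *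
              ((n.choose j : ℂ) * (n.choose (j+1)) * z^j) := by
      intro j hj
      simp only [mem_range] at hj
      rw [nat_coeff n j hj, show n-(n-1-j) = j+1 by omega]
      push_cast
      ring
    rw [Finset.sum_congr rfl hterm2, ← Finset.mul_sum, hzc, mul_zero]
  have hev : aeval w (derivative^[n-1] ((X : Polynomial ℝ)^n * (1-X)^n)) = 0 := by
    rcases mul_eq_zero.1 key with h | h
    · exact absurd h (pow_ne_zero _ hz1')
    · exact h
  have hwim : w.im = 0 := real_root_of_card _ hd0 hdr w hev
  have hzw : z * (w - 1) = w := by linear_combination hw1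
  have hwne : w - 1 ≠ 0 := by
    intro h
    have h2 := hzw
    rw [h, mul_zero] at h2
    rw [← h2] at h
    norm_num at h
  have hz2 : z = w / (w-1) := (eq_div_iff hwne).2 hzw
  rw [hz2]
  have hwre : w = (w.re : ℂ) := Complex.ext rfl (by simp [hwim])
  rw [hwre, show ((w.re : ℂ) - 1) = ((w.re - 1 : ℝ) : ℂ) by push_cast; ring,
    ← Complex.ofReal_div]
  exact Complex.ofReal_im _
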